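/- For $n\ge 1$, $R>0$, $\tau>0$, the function $M(r,t)=\frac{r^n}{n(t+\tau)}$ for $0\le r\le R\big(\frac{t+\tau}{\tau}\big)^{1/n}$ and $M(r,t)=\frac{R^n}{n\tau}$ for $r\ge R\big(\frac{t+\tau}{\tau}\big)^{1/n}$ is, for each $t>0$, a locally Lipschitz nondecreasing function of $r$ and satisfies the Burgers equation $M_t+\frac{1}{r^{n-1}}M M_r=0$ at every point $(r,t)$ with $r\ne R\big(\frac{t+\tau}{\tau}\big)^{1/n}$ and $r>0$. -/

import Mathlib

/-- The mass function of the vortex patch: `M(r,t) = rⁿ/(n(t+τ))` for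
`0 ≤ r ≤ R((t+τ)/τ)^{1/n}` and `M(r,t) = Rⁿ/(nτ)` beyond, is for each `t > 0` a locally
Lipschitz nondecreasing function of `r` on `[0,∞)` and satisfies the Burgers equation
`M_t + r^{1-n} M M_r = 0` at every point `(r,t)` with `r > 0` away from the interface. -/
theorem stmt_9 (n : ℕ) (hn : 1 ≤ n) (R τ : ℝ) (hR : 0 < R) (hτ : 0 < τ)
    (M : ℝ → ℝ → ℝ)
    (hM : ∀ r t : ℝ, M r t =
      if r ≤ R * ((t + τ) / τ) ^ ((1:ℝ)/n) then r ^ n / (n * (t + τ)) else R ^ n / (n * τ)) :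
    (∀ t : ℝ, 0 < t →
      MonotoneOn (fun r => M r t) (Set.Ici 0) ∧
      ∀ r : ℝ, 0 ≤ r → ∃ (K : NNReal) (ε : ℝ), 0 < ε ∧
        LipschitzOnWith K (fun r => M r t) (Metric.ball r ε ∩ Set.Ici 0)) ∧
    (∀ r t : ℝ, 0 < r → 0 < t → r ≠ R * ((t + τ) / τ) ^ ((1:ℝ)/n) →
      ∃ Mt Mr : ℝ, HasDerivAt (fun s => M s t) Mr r ∧ HasDerivAt (fun σ => M r σ) Mt t ∧
        Mt + (1 / r ^ (n - 1)) * M r t * Mr = 0) := by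
  have hn0 : (n : ℝ) ≠ 0 := Nat.cast_ne_zero.mpr (by omega)
  have hnpos : (0:ℝ) < n := by positivity
  constructor
  · intro t ht
    have htτ : (0:ℝ) < t + τ := by linarith
    set ρ : ℝ := R * ((t + τ) / τ) ^ ((1:ℝ)/n) with hρdef
    have hbpos : (0:ℝ) < (t + τ) / τ := by positivity
    have hρpos : 0 < ρ := by
      have : (0:ℝ) < ((t + τ) / τ) ^ ((1:ℝ)/n) := Real.rpow_pos_of_pos hbpos _
      positivity
    have hkey : ρ ^ n = R ^ n * ((t + τ) / τ) := by
      rw [hρdef, mul_pow, ← Real.rpow_natCast (((t + τ) / τ) ^ ((1:ℝ)/n)) n,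
        ← Real.rpow_mul hbpos.le]
      rw [one_div, inv_mul_cancel₀ hn0, Real.rpow_one]
    have hval : ρ ^ n / (n * (t + τ)) = R ^ n / (n * τ) := by
      rw [hkey]; field_simp
    have hmin : ∀ x ∈ Set.Ici (0:ℝ), M x t = min (x ^ n / (n * (t + τ))) (R ^ n / (n * τ)) := by
      intro x hx
      rw [hM]
      split_ifs with h
      · have hle : x ^ n / (↑n * (t + τ)) ≤ R ^ n / (↑n * τ) := by
          rw [← hval]
          exact (div_le_div_iff_of_pos_right (by positivity)).mpr (pow_le_pow_left₀ hx h n)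
        exact (min_eq_left hle).symm
      · push_neg at h
        have hle : R ^ n / (↑n * τ) ≤ x ^ n / (↑n * (t + τ)) := by
          rw [← hval]
          exact (div_le_div_iff_of_pos_right (by positivity)).mpr (pow_le_pow_left₀ hρpos.le h.le n)
        exact (min_eq_right hle).symm
    constructor
    · intro a ha b hb hab
      simp only
      rw [hmin a ha, hmin b hb]
      exact min_le_min ((div_le_div_iff_of_pos_right (by positivity)).mpr (pow_le_pow_left₀ ha hab n)) le_rfl
    · intro r hr
      set C : ℝ := (n * (r + 1) ^ (n - 1)) / (n * (t + τ)) with hC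
      have hC0 : 0 ≤ C := by positivity
      refine ⟨Real.toNNReal C, 1, one_pos, ?_⟩
      set s : Set ℝ := Metric.ball r 1 ∩ Set.Ici 0 with hs
      have hconv : Convex ℝ s := (convex_ball r 1).inter (convex_Ici 0)
      have hf1 : ∀ x ∈ s, ∀ y ∈ s,
          |x ^ n / (n * (t + τ)) - y ^ n / (n * (t + τ))| ≤ C * |x - y| := by
        intro x hx y hy
        have := hconv.norm_image_sub_le_of_norm_hasDerivWithin_le (C := C)
          (f := fun z : ℝ => z ^ n / (n * (t + τ)))
          (f' := fun z : ℝ => (n : ℝ) * z ^ (n - 1) / (n * (t + τ)))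
          (fun z _ => ((hasDerivAt_pow n z).div_const (n * (t + τ))).hasDerivWithinAt)
          (fun z hz => by
            rw [Real.norm_eq_abs, hC]
            have hz0 : 0 ≤ z := hz.2
            have hz1 : z ≤ r + 1 := by
              have := hz.1
              rw [Metric.mem_ball, Real.dist_eq] at this
              cases abs_lt.mp this with
              | intro h1 h2 => linarith
            rw [abs_div, abs_mul, abs_of_nonneg (by positivity : (0:ℝ) ≤ (n:ℝ)),
              abs_of_nonneg (by positivity : (0:ℝ) ≤ z ^ (n-1)),
              abs_of_nonneg (by positivity : (0:ℝ) ≤ (n:ℝ) * (t + τ))]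
            gcongr) hy hx
        simpa [Real.norm_eq_abs] using this
      rw [lipschitzOnWith_iff_dist_le_mul]
      intro x hx y hy
      rw [Real.dist_eq, Real.dist_eq, hmin x hx.2, hmin y hy.2,
        Real.coe_toNNReal _ hC0]
      calc |min (x ^ n / (n * (t + τ))) (R ^ n / (n * τ)) -
              min (y ^ n / (n * (t + τ))) (R ^ n / (n * τ))|
          ≤ max |x ^ n / (n * (t + τ)) - y ^ n / (n * (t + τ))|
              |R ^ n / (n * τ) - R ^ n / (n * τ)| := abs_min_sub_min_le_max _ _ _ _
        _ ≤ C * |x - y| := by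
            rw [sub_self, abs_zero]
            exact max_le (hf1 x hx y hy) (by positivity)
  · intro r t hr ht hne
    obtain ⟨m, rfl⟩ : ∃ m, n = m + 1 := ⟨n - 1, by omega⟩
    have htτ : (0:ℝ) < t + τ := by linarith
    set ρ : ℝ := R * ((t + τ) / τ) ^ ((1:ℝ)/(m+1:ℕ)) with hρdef
    have hg : ContinuousAt (fun σ : ℝ => R * ((σ + τ) / τ) ^ ((1:ℝ)/(m+1:ℕ))) t := by
      apply ContinuousAt.mul continuousAt_const
      apply ContinuousAt.rpow_const
      · exact (continuousAt_id.add continuousAt_const).div continuousAt_const (by positivity)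
      · right; positivity
    rcases lt_or_gt_of_ne hne with hlt | hgt
    · -- inside: r < ρ
      have hMr : HasDerivAt (fun s => M s t)
          (((m+1:ℕ):ℝ) * r ^ m / (((m+1:ℕ):ℝ) * (t + τ))) r := by
        have h1 : HasDerivAt (fun s : ℝ => s ^ (m+1) / (((m+1:ℕ):ℝ) * (t + τ)))
            (((m+1:ℕ):ℝ) * r ^ m / (((m+1:ℕ):ℝ) * (t + τ))) r := by
          simpa using (hasDerivAt_pow (m+1) r).div_const (((m+1:ℕ):ℝ) * (t + τ))
        apply h1.congr_of_eventuallyEq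
        filter_upwards [eventually_lt_nhds hlt] with s hs
        rw [hM, if_pos hs.le]
      have hev : ∀ᶠ σ in nhds t, r < R * ((σ + τ) / τ) ^ ((1:ℝ)/(m+1:ℕ)) :=
        continuousAt_const.eventually_lt hg hlt
      have hMt : HasDerivAt (fun σ => M r σ)
          ((0 * (((m+1:ℕ):ℝ) * (t + τ)) - r ^ (m+1) * ((m+1:ℕ):ℝ)) /
            (((m+1:ℕ):ℝ) * (t + τ)) ^ 2) t := by
        have hd : HasDerivAt (fun σ : ℝ => ((m+1:ℕ):ℝ) * (σ + τ)) ((m+1:ℕ):ℝ) t := by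
          simpa using ((hasDerivAt_id t).add_const τ).const_mul ((m+1:ℕ):ℝ)
        have h2 := (hasDerivAt_const t (r ^ (m+1))).div hd (by positivity)
        simp only [Pi.div_def] at h2
        apply h2.congr_of_eventuallyEq
        filter_upwards [hev] with σ hσ
        rw [hM, if_pos hσ.le]
      refine ⟨_, _, hMr, hMt, ?_⟩
      rw [hM, if_pos hlt.le]
      have hr0 : r ≠ 0 := ne_of_gt hr
      have hd0 : ((m+1:ℕ):ℝ) * (t + τ) ≠ 0 := by positivity
      simp only [Nat.add_sub_cancel]
      field_simp
      ring
    · -- outside: r > ρ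
      have hMr : HasDerivAt (fun s => M s t) 0 r := by
        apply (hasDerivAt_const r (R ^ (m+1) / (((m+1:ℕ):ℝ) * τ))).congr_of_eventuallyEq
        filter_upwards [eventually_gt_nhds hgt] with s hs
        rw [hM, if_neg (not_le.mpr hs)]
      have hev : ∀ᶠ σ in nhds t, R * ((σ + τ) / τ) ^ ((1:ℝ)/(m+1:ℕ)) < r :=
        hg.eventually_lt continuousAt_const hgt
      have hMt : HasDerivAt (fun σ => M r σ) 0 t := by
        apply (hasDerivAt_const t (R ^ (m+1) / (((m+1:ℕ):ℝ) * τ))).congr_of_eventuallyEq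
        filter_upwards [hev] with σ hσ
        rw [hM, if_neg (not_le.mpr hσ)]
      exact ⟨0, 0, hMr, hMt, by ring⟩
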